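/- Fix integers d ≥ 2, b ≥ 3, a nonempty proper set A ⊊ {0,...,b−1}, and 1 ≤ m ≤ d; let N = Σ_{i=0}^{m−1} C(d−1, i)·|A|^i·(b−|A|)^{d−i−1}. For each integer p of the form p = λb^k + Σ_{j=0}^{k−1} a_j b^j with all a_j ∈ A, the hyperplane {(x_1,...,x_d) ∈ V_{k'} : x_1 = p} of Γ_{k'}(d,b,A,m) (for any k' with b^{k'} > p) contained in a cube of side b^{k+1} meets at most (b^{d−1}/(b−|A|)^{d−1})·N^{k+1} vertices of Γ_{k'}(d,b,A,m) lying in that cube; equivalently, the number of (x_2,...,x_d) ∈ [0,b^{k+1})^{d−1} such that (p mod b^{k+1}, x_2,...,x_d) has at most m coordinates with an A-digit in any common position is at most (b/(b−|A|))^{d−1}·N^{k+1}. -/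

import Mathlib

open scoped Classical

/-- Reachability within the subgraph of `X` induced on a vertex set `s`. -/
def SimpleGraph.ReachIn {V : Type*} (X : SimpleGraph V) (s : Set V) (v w : V) : Prop :=
  ∃ (hv : v ∈ s) (hw : w ∈ s), (X.induce s).Reachable ⟨v, hv⟩ ⟨w, hw⟩

/-- The vertex set of the connected component of `v` in the subgraph of `X` induced on `s`
(empty if `v ∉ s`). -/
def SimpleGraph.compIn {V : Type*} (X : SimpleGraph V) (s : Set V) (v : V) : Set V :=
  {w | X.ReachIn s v w}

/-- `T` is a vertex set witnessing `cut¹ᐟ²` for the subgraph of `X` induced on the finite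
vertex set `G`: after removing `T` from `G`, every connected component has at most
`|G|/2` vertices. -/
def IsHalfCutSet {V : Type*} (X : SimpleGraph V) (G T : Finset V) : Prop :=
  T ⊆ G ∧ ∀ v : V, 2 * (X.compIn (↑(G \ T)) v).ncard ≤ G.card

/-- `cut¹ᐟ²` of the subgraph of `X` induced on the finite vertex set `G`: the least size of
a vertex set whose removal leaves all connected components of size at most `|G|/2`. -/
noncomputable def cutHalf {V : Type*} (X : SimpleGraph V) (G : Finset V) : ℕ :=
  sInf {t | ∃ T : Finset V, IsHalfCutSet X G T ∧ T.card = t}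

/-- The `1/2`-separation profile of `X`, over finite subgraphs with vertex set inside `W`. -/
noncomputable def sepHalf {V : Type*} (X : SimpleGraph V) (W : Set V) (n : ℕ) : ℕ :=
  sSup {c | ∃ G : Finset V, ↑G ⊆ W ∧ G.card ≤ n ∧ c = cutHalf X G}

/-- The `i`-th digit of `x` in base `b`. -/
def digit (b i x : ℕ) : ℕ := x / b ^ i % b

/-- Membership in the vertex set `V_k` of `Γ_k(d,b,A,m)`: all coordinates lie in `[0, b^k)`
and at every digit position `j < k`, at most `m` coordinates have their `j`-th base-`b`
digit in `A`. -/
def GenMem (d b : ℕ) (A : Finset ℕ) (m k : ℕ) (x : Fin d → ℕ) : Prop :=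
  (∀ i, x i < b ^ k) ∧
    ∀ j < k, (Finset.univ.filter fun i : Fin d => digit b j (x i) ∈ A).card ≤ m

/-- The vertex set of `S(d,b,A,m) = ⋃ₖ Γ_k(d,b,A,m)`. -/
def GenS (d b : ℕ) (A : Finset ℕ) (m : ℕ) : Set (Fin d → ℕ) :=
  {x | ∃ k, GenMem d b A m k x}

/-- The infinite graph `S(d,b,A,m)`, with edges between valid points at `ℓ¹`-distance 1. -/
def GenGraph (d b : ℕ) (A : Finset ℕ) (m : ℕ) : SimpleGraph (Fin d → ℕ) where
  Adj x y := x ∈ GenS d b A m ∧ y ∈ GenS d b A m ∧ (∑ i, |(x i : ℤ) - y i|) = 1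
  symm := by
    constructor
    rintro x y ⟨hx, hy, h⟩
    refine ⟨hy, hx, ?_⟩
    rw [← h]
    exact Finset.sum_congr rfl fun i _ => abs_sub_comm _ _
  loopless := by constructor; rintro x ⟨-, -, h⟩; simp at h

/-- The vertex set of `Γ_k(d,b,A,m)`. -/
noncomputable def GenGammaV (d b : ℕ) (A : Finset ℕ) (m k : ℕ) : Finset (Fin d → ℕ) :=
  (Fintype.piFinset fun _ : Fin d => Finset.range (b ^ k)).filter (GenMem d b A m k)

/-- The full line of length `b^k` through `x` in coordinate direction `i` is entirely
contained in `Γ_k(d,b,A,m)`. -/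
def GenLineComplete (d b : ℕ) (A : Finset ℕ) (m k : ℕ) (i : Fin d) (x : Fin d → ℕ) : Prop :=
  ∀ t < b ^ k, GenMem d b A m k (Function.update x i t)

/-- The set of points of the full line of length `b^k` through `x` in direction `i`. -/
def GenLineSet (d b k : ℕ) (i : Fin d) (x : Fin d → ℕ) : Set (Fin d → ℕ) :=
  {y | ∃ t < b ^ k, y = Function.update x i t}

/-- The vertex set of the complete-lines subgraph `C_k` of `Γ_k(d,b,A,m)`. -/
noncomputable def GenCkV (d b : ℕ) (A : Finset ℕ) (m k : ℕ) : Finset (Fin d → ℕ) :=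
  (GenGammaV d b A m k).filter fun x => ∃ i : Fin d, GenLineComplete d b A m k i x

/-- `N`, the number of single-column digit configurations of `d-1` coordinates with at
most `m-1` digits in `A`. -/
def genN (d b : ℕ) (A : Finset ℕ) (m : ℕ) : ℕ :=
  ∑ i ∈ Finset.range m, (d - 1).choose i * A.card ^ i * (b - A.card) ^ (d - i - 1)

lemma digit_lt {b : ℕ} (hb : 0 < b) (j x : ℕ) : digit b j x < b := Nat.mod_lt _ hb

lemma digit_add_high {b : ℕ} (hb : 0 < b) {j n : ℕ} (hj : j < n) (y c : ℕ) :
    digit b j (y + c * b ^ n) = digit b j y := by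
  unfold digit
  have h1 : c * b ^ n = c * b ^ (n - j - 1) * b * b ^ j := by
    rw [mul_assoc, mul_assoc, ← pow_succ']
    congr 2
    rw [← pow_add]
    congr 1
    omega
  rw [h1, Nat.add_mul_div_right _ _ (pow_pos hb j), Nat.add_mul_mod_self_right]

lemma digit_mod_pow {b : ℕ} (hb : 0 < b) {j n : ℕ} (hj : j < n) (x : ℕ) :
    digit b j (x % b ^ n) = digit b j x := by
  conv_rhs => rw [← Nat.mod_add_div x (b ^ n), mul_comm]
  rw [digit_add_high hb hj]

lemma digit_expansion {b : ℕ} (hb : 0 < b) {n x : ℕ} (hx : x < b ^ n) :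
    x = ∑ j ∈ Finset.range n, digit b j x * b ^ j := by
  induction n generalizing x with
  | zero => simpa using hx
  | succ n ih =>
    rw [Finset.sum_range_succ]
    have h1 : ∀ j < n, digit b j x = digit b j (x % b ^ n) := fun j hj =>
      (digit_mod_pow hb hj x).symm
    have h2 : x % b ^ n = ∑ j ∈ Finset.range n, digit b j (x % b ^ n) * b ^ j :=
      ih (Nat.mod_lt _ (pow_pos hb n))
    have h3 : digit b n x = x / b ^ n := by
      unfold digit
      exact Nat.mod_eq_of_lt (Nat.div_lt_of_lt_mul (by rwa [← pow_succ]))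
    calc x = x % b ^ n + x / b ^ n * b ^ n := (Nat.mod_add_div' x (b ^ n)).symm
      _ = _ := by
        rw [h2, h3]
        congr 1
        exact Finset.sum_congr rfl fun j hj => by rw [h1 j (Finset.mem_range.mp hj)]

lemma eq_of_digits {b : ℕ} (hb : 0 < b) {n x x' : ℕ} (hx : x < b ^ n) (hx' : x' < b ^ n)
    (h : ∀ j < n, digit b j x = digit b j x') : x = x' := by
  rw [digit_expansion hb hx, digit_expansion hb hx']
  exact Finset.sum_congr rfl fun j hj => by rw [h j (Finset.mem_range.mp hj)]

lemma sum_lt_pow {b k : ℕ} (hb : 0 < b) (a : ℕ → ℕ) (ha : ∀ j < k, a j < b) :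
    ∑ j ∈ Finset.range k, a j * b ^ j < b ^ k := by
  induction k with
  | zero => simpa using hb
  | succ k ih =>
    rw [Finset.sum_range_succ]
    have h1 := ih (fun j hj => ha j (by omega))
    have h2 : a k ≤ b - 1 := by have := ha k (by omega); omega
    have : a k * b ^ k ≤ (b - 1) * b ^ k := Nat.mul_le_mul_right _ h2
    have hbk : 0 < b ^ k := pow_pos hb k
    calc ∑ j ∈ Finset.range k, a j * b ^ j + a k * b ^ k
        < b ^ k + (b - 1) * b ^ k := by omega
      _ = b ^ (k + 1) := by
        rw [pow_succ, mul_comm (b ^ k) b]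
        cases b with
        | zero => omega
        | succ b => rw [Nat.succ_sub_one, Nat.succ_mul]; exact Nat.add_comm _ _

lemma digit_sum {b k : ℕ} (hb : 0 < b) (a : ℕ → ℕ) (ha : ∀ j < k, a j < b) :
    ∀ j < k, digit b j (∑ j' ∈ Finset.range k, a j' * b ^ j') = a j := by
  induction k with
  | zero => omega
  | succ k ih =>
    intro j hj
    rw [Finset.sum_range_succ]
    rcases lt_or_ge j k with h | h
    · rw [digit_add_high hb h, ih (fun j hj => ha j (by omega)) j h]
    · have hjk : j = k := by omega
      subst hjk
      have hlt : ∑ j' ∈ Finset.range j, a j' * b ^ j' < b ^ j :=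
        sum_lt_pow hb a (fun j' hj' => ha j' (by omega))
      have haj : a j < b := ha j (by omega)
      unfold digit
      rw [Nat.add_mul_div_right _ _ (pow_pos hb j), Nat.div_eq_of_lt hlt, zero_add,
        Nat.mod_eq_of_lt haj]
open Finset
lemma colA (d b m : ℕ) (A : Finset ℕ) (hAb : A ⊆ Finset.range b) (hm : 1 ≤ m)
    (i0 : Fin d) (v : ℕ) (hv : v ∈ A) :
    ((Fintype.piFinset fun _ : Fin d => Finset.range b).filter
        (fun c => c i0 = v ∧ (Finset.univ.filter fun i => c i ∈ A).card ≤ m)).card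
      ≤ ∑ i ∈ Finset.range m, (d - 1).choose i * A.card ^ i * (b - A.card) ^ (d - 1 - i) := by
  classical
  set T : Finset (Fin d) := Finset.univ.erase i0 with hT
  have hTcard : T.card = d - 1 := by
    rw [hT, Finset.card_erase_of_mem (Finset.mem_univ i0), Finset.card_univ, Fintype.card_fin]
  set G : Finset (Fin d) → Finset (Fin d → ℕ) := fun S =>
    Fintype.piFinset (fun i => if i = i0 then {v} else if i ∈ S then A else Finset.range b \ A)
    with hG
  -- subset claim
  have hsub : ((Fintype.piFinset fun _ : Fin d => Finset.range b).filter
        (fun c => c i0 = v ∧ (Finset.univ.filter fun i => c i ∈ A).card ≤ m))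
      ⊆ (T.powerset.filter (fun S => S.card ≤ m - 1)).biUnion G := by
    intro c hc
    simp only [Finset.mem_filter, Fintype.mem_piFinset] at hc
    obtain ⟨hrange, hci0, hcard⟩ := hc
    set S : Finset (Fin d) := (Finset.univ.filter fun i => c i ∈ A).erase i0 with hS
    have hi0mem : i0 ∈ Finset.univ.filter fun i => c i ∈ A := by
      simp [hci0, hv]
    refine Finset.mem_biUnion.mpr ⟨S, ?_, ?_⟩
    · simp only [Finset.mem_filter, Finset.mem_powerset]
      constructor
      · exact Finset.erase_subset_erase i0 (Finset.filter_subset _ _)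
      · have h1 : S.card = (Finset.univ.filter fun i => c i ∈ A).card - 1 := by
          rw [hS]; exact Finset.card_erase_of_mem hi0mem
        have h2 : 0 < (Finset.univ.filter fun i => c i ∈ A).card :=
          Finset.card_pos.mpr ⟨i0, hi0mem⟩
        omega
    · rw [hG]
      simp only [Fintype.mem_piFinset]
      intro i
      by_cases h1 : i = i0
      · simp [h1, hci0]
      · by_cases h2 : i ∈ S
        · have : c i ∈ A := by
            rw [hS] at h2
            exact (Finset.mem_filter.mp (Finset.mem_of_mem_erase h2)).2
          simp [h1, h2, this]
        · have : c i ∉ A := by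
            intro hmem
            exact h2 (by rw [hS]; exact Finset.mem_erase.mpr ⟨h1, by simp [hmem]⟩)
          simp [h1, h2, Finset.mem_sdiff, hrange i, this]
  -- card of G S
  have hGcard : ∀ S ∈ T.powerset.filter (fun S => S.card ≤ m - 1),
      (G S).card = A.card ^ S.card * (b - A.card) ^ (d - 1 - S.card) := by
    intro S hSmem
    simp only [Finset.mem_filter, Finset.mem_powerset] at hSmem
    obtain ⟨hST, hScard⟩ := hSmem
    rw [hG]
    rw [Fintype.card_piFinset]
    rw [← Finset.mul_prod_erase Finset.univ _ (Finset.mem_univ i0)]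
    simp only [if_pos rfl, Finset.card_singleton, one_mul]
    rw [← hT]
    have : ∀ i ∈ T, ((if i = i0 then ({v} : Finset ℕ) else if i ∈ S then A else Finset.range b \ A).card)
        = if i ∈ S then A.card else b - A.card := by
      intro i hi
      have hne : i ≠ i0 := Finset.ne_of_mem_erase hi
      rw [if_neg hne]
      by_cases h : i ∈ S
      · simp [h]
      · simp only [h, if_false]
        rw [Finset.card_sdiff_of_subset hAb, Finset.card_range]
    rw [Finset.prod_congr rfl this, Finset.prod_ite, Finset.prod_const, Finset.prod_const]
    have h1 : T.filter (fun i => i ∈ S) = S := by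
      ext i
      simp only [Finset.mem_filter]
      exact ⟨fun h => h.2, fun h => ⟨hST h, h⟩⟩
    have h2 : (T.filter (fun i => ¬ i ∈ S)).card = d - 1 - S.card := by
      have := Finset.card_filter_add_card_filter_not (s := T) (fun i => i ∈ S)
      rw [h1] at this
      omega
    rw [h1, h2]
    simp
  -- sum over powerset
  calc _ ≤ ((T.powerset.filter (fun S => S.card ≤ m - 1)).biUnion G).card :=
        Finset.card_le_card hsub
    _ ≤ ∑ S ∈ T.powerset.filter (fun S => S.card ≤ m - 1), (G S).card :=
        Finset.card_biUnion_le
    _ = ∑ S ∈ T.powerset.filter (fun S => S.card ≤ m - 1),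
          A.card ^ S.card * (b - A.card) ^ (d - 1 - S.card) := Finset.sum_congr rfl hGcard
    _ ≤ _ := by
        have hsplit : T.powerset.filter (fun S => S.card ≤ m - 1)
            = (Finset.range m).biUnion (fun i => T.powersetCard i) := by
          ext S
          simp only [Finset.mem_filter, Finset.mem_powerset, Finset.mem_biUnion,
            Finset.mem_range, Finset.mem_powersetCard]
          constructor
          · rintro ⟨h1, h2⟩; exact ⟨S.card, by omega, h1, rfl⟩
          · rintro ⟨i, hi, h1, rfl⟩; exact ⟨h1, by omega⟩
        rw [hsplit, Finset.sum_biUnion]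
        · apply le_of_eq
          apply Finset.sum_congr rfl
          intro i _
          rw [Finset.sum_congr rfl (fun S hS => by
            rw [(Finset.mem_powersetCard.mp hS).2]), Finset.sum_const,
            Finset.card_powersetCard, hTcard, smul_eq_mul, mul_assoc]
        · intro x _ y _ hxy
          apply Finset.disjoint_left.mpr
          intro S hSx hSy
          simp only [Finset.mem_powersetCard] at hSx hSy
          exact hxy (by omega)


/-- For `p = λ·b^k + Σ_{j<k} a_j·b^j` with all `a_j ∈ A`, the number of tuples
`(x₂,…,x_d) ∈ [0,b^(k+1))^(d-1)` such that `(p mod b^(k+1), x₂,…,x_d)` has at most `m`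
coordinates with an `A`-digit at any common position is at most
`(b/(b-|A|))^(d-1) · N^(k+1)`. -/
theorem hyperplane_count (d b m k : ℕ) (hd : 2 ≤ d) (hb : 3 ≤ b)
    (A : Finset ℕ) (hA : A ⊂ Finset.range b) (hAne : A.Nonempty)
    (hm₁ : 1 ≤ m) (hm₂ : m ≤ d)
    (lam : ℕ) (a : ℕ → ℕ) (ha : ∀ j < k, a j ∈ A)
    (p : ℕ) (hp : p = lam * b ^ k + ∑ j ∈ Finset.range k, a j * b ^ j) :
    ({y : Fin d → ℕ | y ⟨0, by omega⟩ = p % b ^ (k + 1) ∧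
        (∀ i : Fin d, i ≠ ⟨0, by omega⟩ → y i < b ^ (k + 1)) ∧
        ∀ j < k + 1,
          (Finset.univ.filter fun i : Fin d => digit b j (y i) ∈ A).card ≤ m}.ncard : ℝ)
      ≤ ((b : ℝ) / ((b - A.card : ℕ) : ℝ)) ^ (d - 1) * (genN d b A m : ℝ) ^ (k + 1) := by
  classical
  have hb0 : 0 < b := by omega
  have hAsub : A ⊆ Finset.range b := hA.subset
  have hAcard : A.card < b := by
    have := Finset.card_lt_card hA
    simpa using this
  set i0 : Fin d := ⟨0, by omega⟩ with hi0
  set q := p % b ^ (k + 1) with hq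
  have hqlt : q < b ^ (k + 1) := Nat.mod_lt _ (pow_pos hb0 _)
  set F : Finset (Fin d → ℕ) :=
    (Fintype.piFinset fun _ : Fin d => Finset.range (b ^ (k + 1))).filter
      (fun y => y i0 = q ∧ ∀ j < k + 1,
        (Finset.univ.filter fun i : Fin d => digit b j (y i) ∈ A).card ≤ m) with hF
  have hset : {y : Fin d → ℕ | y i0 = q ∧
        (∀ i : Fin d, i ≠ i0 → y i < b ^ (k + 1)) ∧
        ∀ j < k + 1,
          (Finset.univ.filter fun i : Fin d => digit b j (y i) ∈ A).card ≤ m} = ↑F := by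
    ext y
    simp only [Set.mem_setOf_eq, hF, Finset.coe_filter, Fintype.mem_piFinset,
      Finset.mem_range, Set.mem_setOf_eq]
    constructor
    · rintro ⟨h1, h2, h3⟩
      refine ⟨fun i => ?_, h1, h3⟩
      by_cases h : i = i0
      · rw [h, h1]; exact hqlt
      · exact h2 i h
    · rintro ⟨h1, h2, h3⟩
      exact ⟨h2, fun i _ => h1 i, h3⟩
  rw [hset, Set.ncard_coe_finset]
  -- digit facts about q
  have hab : ∀ j' < k, a j' < b := fun j' hj' => Finset.mem_range.mp (hAsub (ha j' hj'))
  have hdigq : ∀ j < k, digit b j q = a j := by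
    intro j hj
    rw [hq, digit_mod_pow hb0 (by omega) p, hp, add_comm, digit_add_high hb0 hj,
      digit_sum hb0 a hab j hj]
  -- column finsets
  set D : Fin (k + 1) → Finset (Fin d → ℕ) := fun j =>
    (Fintype.piFinset fun _ : Fin d => Finset.range b).filter
      (fun c => c i0 = digit b j.val q ∧
        (Finset.univ.filter fun i : Fin d => c i ∈ A).card ≤ m) with hD
  have hinj : F.card ≤ (Fintype.piFinset D).card := by
    apply Finset.card_le_card_of_injOn
      (fun y => fun j : Fin (k + 1) => fun i : Fin d => digit b j.val (y i))
    · intro y hy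
      simp only [hF, Finset.mem_coe, Finset.mem_filter, Fintype.mem_piFinset, Finset.mem_range] at hy
      obtain ⟨hyr, hy0, hycol⟩ := hy
      rw [Finset.mem_coe, Fintype.mem_piFinset]
      intro j
      simp only [hD, Finset.mem_filter, Fintype.mem_piFinset, Finset.mem_range]
      exact ⟨fun i => digit_lt hb0 _ _, by rw [hy0], hycol j.val j.isLt⟩
    · intro y hy y' hy' hEq
      simp only [hF, Finset.coe_filter, Set.mem_setOf_eq, Fintype.mem_piFinset,
        Finset.mem_range] at hy hy'
      funext i
      apply eq_of_digits hb0 (hy.1 i) (hy'.1 i)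
      intro j hj
      exact congrFun (congrFun hEq ⟨j, hj⟩) i
  have hDcard1 : ∀ j : Fin (k + 1), j.val < k → (D j).card ≤ genN d b A m := by
    intro j hj
    have hv : digit b j.val q ∈ A := by rw [hdigq j.val hj]; exact ha j.val hj
    calc (D j).card ≤ ∑ i ∈ Finset.range m,
          (d - 1).choose i * A.card ^ i * (b - A.card) ^ (d - 1 - i) :=
        colA d b m A hAsub hm₁ i0 _ hv
      _ = genN d b A m := by
        unfold genN
        exact Finset.sum_congr rfl fun i _ => by rw [show d - 1 - i = d - i - 1 by omega]
  have hDcard2 : (D (Fin.last k)).card ≤ b ^ (d - 1) := by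
    have hsub2 : D (Fin.last k) ⊆ Fintype.piFinset
        (fun i : Fin d => if i = i0 then ({digit b k q} : Finset ℕ) else Finset.range b) := by
      intro c hc
      simp only [hD, Finset.mem_filter, Fintype.mem_piFinset] at hc
      rw [Fintype.mem_piFinset]
      intro i
      by_cases h : i = i0
      · rw [if_pos h, Finset.mem_singleton, h]
        have h2 := hc.2.1
        rwa [Fin.val_last] at h2
      · simp only [if_neg h]
        exact hc.1 i
    calc (D (Fin.last k)).card ≤ _ := Finset.card_le_card hsub2
      _ = b ^ (d - 1) := by
        rw [Fintype.card_piFinset,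
          ← Finset.mul_prod_erase Finset.univ _ (Finset.mem_univ i0)]
        rw [if_pos rfl, Finset.card_singleton, one_mul]
        have : ∀ i ∈ Finset.univ.erase i0,
            ((if i = i0 then ({digit b k q} : Finset ℕ) else Finset.range b).card) = b := by
          intro i hi
          rw [if_neg (Finset.ne_of_mem_erase hi), Finset.card_range]
        rw [Finset.prod_congr rfl this, Finset.prod_const,
          Finset.card_erase_of_mem (Finset.mem_univ i0), Finset.card_univ, Fintype.card_fin]
  have hprod : (Fintype.piFinset D).card ≤ genN d b A m ^ k * b ^ (d - 1) := by
    rw [Fintype.card_piFinset, Fin.prod_univ_castSucc]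
    have h1 : ∏ i : Fin k, (D i.castSucc).card ≤ genN d b A m ^ k := by
      calc ∏ i : Fin k, (D i.castSucc).card ≤ ∏ _i : Fin k, genN d b A m :=
          Finset.prod_le_prod' fun i _ => hDcard1 i.castSucc i.isLt
        _ = genN d b A m ^ k := by
          rw [Finset.prod_const, Finset.card_univ, Fintype.card_fin]
    exact Nat.mul_le_mul h1 hDcard2
  -- final numeric bound
  set c := b - A.card with hc
  have hc1 : 1 ≤ c := by omega
  have hNge : c ^ (d - 1) ≤ genN d b A m := by
    have h0 : (0 : ℕ) ∈ Finset.range m := Finset.mem_range.mpr hm₁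
    have := Finset.single_le_sum
      (f := fun i => (d - 1).choose i * A.card ^ i * (b - A.card) ^ (d - i - 1))
      (fun i _ => Nat.zero_le _) h0
    unfold genN
    simpa [hc] using this
  have hnat : genN d b A m ^ k * b ^ (d - 1) * c ^ (d - 1)
      ≤ b ^ (d - 1) * genN d b A m ^ (k + 1) := by
    rw [pow_succ]
    calc genN d b A m ^ k * b ^ (d - 1) * c ^ (d - 1)
        = b ^ (d - 1) * (genN d b A m ^ k * c ^ (d - 1)) := by ring
      _ ≤ b ^ (d - 1) * (genN d b A m ^ k * genN d b A m) :=
        Nat.mul_le_mul_left _ (Nat.mul_le_mul_left _ hNge)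
  have hcpos : (0 : ℝ) < (c : ℝ) := by exact_mod_cast hc1
  have hstep : ((genN d b A m ^ k * b ^ (d - 1) : ℕ) : ℝ)
      ≤ ((b : ℝ) / (c : ℝ)) ^ (d - 1) * (genN d b A m : ℝ) ^ (k + 1) := by
    rw [div_pow, div_mul_eq_mul_div, le_div_iff₀ (by positivity)]
    push_cast
    exact_mod_cast hnat
  calc (F.card : ℝ) ≤ ((genN d b A m ^ k * b ^ (d - 1) : ℕ) : ℝ) := by
        exact_mod_cast le_trans hinj hprod
    _ ≤ _ := hstep
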